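/- Deconcatenation of a half-shuffle: for words u, v with |v| ≥ 1, δ'(u ≻ v) = (u ≻ v) ⊗ e + Σ sh(u₍₁₎ ⊗ v₍₁₎) ⊗ (u₍₂₎ ≻ v₍₂₎), where the sum runs over the deconcatenation components δ'(u) = Σ u₍₁₎⊗u₍₂₎ and δ'(v) = Σ v₍₁₎⊗v₍₂₎ with |v₍₂₎| ≥ 1. -/

import Mathlib

def shuffle {A : Type*} : List A → List A → Multiset (List A)
  | [], w => {w}
  | u, [] => {u}
  | a :: u, b :: v => (shuffle u (b :: v)).map (a :: ·) + (shuffle (a :: u) v).map (b :: ·)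
termination_by u v => u.length + v.length
decreasing_by all_goals simp +arith +decide

lemma range_succ' (n : ℕ) : Multiset.range (n+1) = 0 ::ₘ (Multiset.range n).map (·+1) := by
  rw [Multiset.range, List.range_succ_eq_map]
  simp [Multiset.range]

lemma peel {β : Type*} (n : ℕ) (f : ℕ → Multiset β) :
    (Multiset.range (n+1)).bind f = f 0 + (Multiset.range n).bind (fun i => f (i+1)) := by
  rw [range_succ', Multiset.cons_bind, Multiset.bind_map]

lemma shuffle_nil_left {A : Type*} (v : List A) : shuffle [] v = {v} := by
  cases v <;> simp [shuffle]

lemma shuffle_nil_right {A : Type*} (u : List A) : shuffle u [] = {u} := by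
  cases u <;> simp [shuffle]

lemma shuffle_cons_cons {A : Type*} (a b : A) (u v : List A) :
    shuffle (a::u) (b::v) = (shuffle u (b :: v)).map (a :: ·) + (shuffle (a :: u) v).map (b :: ·) := by
  rw [shuffle]

def PP {A : Type*} (x y x' y' : List A) : Multiset (List A × List A) :=
  (shuffle x y).bind fun w1 => (shuffle x' y').map fun w2 => (w1, w2)

lemma PP_nil_left {A : Type*} (y x' y' : List A) :
    PP [] y x' y' = (shuffle x' y').map fun w2 => (y, w2) := by
  simp [PP, shuffle_nil_left]

lemma PP_nil_right {A : Type*} (x x' y' : List A) :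
    PP x [] x' y' = (shuffle x' y').map fun w2 => (x, w2) := by
  simp [PP, shuffle_nil_right]

lemma PP_cons_cons {A : Type*} (a b : A) (x y x' y' : List A) :
    PP (a::x) (b::y) x' y' =
      ((shuffle x (b::y)).bind fun w1 => (shuffle x' y').map fun w2 => (a::w1, w2)) +
      ((shuffle (a::x) y).bind fun w1 => (shuffle x' y').map fun w2 => (b::w1, w2)) := by
  rw [PP, shuffle_cons_cons, Multiset.add_bind, Multiset.bind_map, Multiset.bind_map]

lemma map_fst_PP {A : Type*} (c : A) (x y x' y' : List A) :
    Multiset.map (fun p => (c::p.1, p.2)) (PP x y x' y') =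
      (shuffle x y).bind fun w1 => (shuffle x' y').map fun w2 => (c::w1, w2) := by
  simp [PP, Multiset.map_bind, Multiset.map_map, Function.comp_def]

def Dm {A : Type*} (u v : List A) : Multiset (List A × List A) :=
  (shuffle u v).bind fun w => (Multiset.range (w.length+1)).map fun k => (w.take k, w.drop k)

def Sm {A : Type*} (u v : List A) : Multiset (List A × List A) :=
  (Multiset.range (u.length+1)).bind fun i =>
    (Multiset.range (v.length+1)).bind fun j =>
      PP (u.take i) (v.take j) (u.drop i) (v.drop j)

lemma Sm_cons {A : Type*} (a b : A) (u v : List A) :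
    Sm (a::u) (b::v) = (shuffle (a::u) (b::v)).map (fun w => (([]:List A), w))
      + (Sm u (b::v)).map (fun p => (a::p.1, p.2))
      + (Sm (a::u) v).map (fun p => (b::p.1, p.2)) := by
  simp only [Sm, List.length_cons]
  simp only [peel (u.length+1) , peel (v.length+1)]
  simp only [List.take_succ_cons, List.drop_succ_cons, List.take_zero, List.drop_zero,
    PP_nil_left, PP_nil_right, PP_cons_cons, map_fst_PP, shuffle_nil_left, shuffle_nil_right,
    Multiset.map_bind, Multiset.map_map, Function.comp_def, Multiset.bind_add,
    Multiset.map_add, Multiset.bind_map, Multiset.singleton_bind, Multiset.map_singleton]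
  abel

lemma splitsOf_cons {A : Type*} (c : A) (w : List A) :
    (Multiset.range ((c::w).length+1)).map (fun k => ((c::w).take k, (c::w).drop k))
    = ((([]:List A), c::w)) ::ₘ
      ((Multiset.range (w.length+1)).map (fun k => (w.take k, w.drop k))).map
        (fun p => (c::p.1, p.2)) := by
  simp only [List.length_cons]
  rw [range_succ' (w.length+1)]
  simp [Multiset.map_map, Function.comp_def]

lemma Dm_cons {A : Type*} (a b : A) (u v : List A) :
    Dm (a::u) (b::v) = (shuffle (a::u) (b::v)).map (fun w => (([]:List A), w))
      + (Dm u (b::v)).map (fun p => (a::p.1, p.2))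
      + (Dm (a::u) v).map (fun p => (b::p.1, p.2)) := by
  simp only [Dm, shuffle_cons_cons, Multiset.add_bind, Multiset.bind_map, splitsOf_cons,
    ← Multiset.singleton_add, Multiset.bind_add, Multiset.bind_singleton, Multiset.map_add,
    Multiset.map_bind, Multiset.map_map, Function.comp_def]
  abel

theorem Dm_eq_Sm {A : Type*} (u v : List A) : Dm u v = Sm u v := by
  induction u, v using shuffle.induct with
  | case1 w =>
    simp [Dm, Sm, shuffle_nil_left, PP_nil_left, PP_nil_right, Multiset.singleton_bind]
  | case2 u _ =>
    simp [Dm, Sm, shuffle_nil_right, PP_nil_left, PP_nil_right, Multiset.singleton_bind]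
  | case3 a u b v ih1 ih2 =>
    rw [Dm_cons, ih1, ih2, ← Sm_cons]

/-- The right half-shuffle on words: `u ≻ (v·a) = sh(u ⊗ v)·a`, `u ≻ e = 0`. -/
def succW {A : Type*} (u v : List A) : Multiset (List A) :=
  match v.getLast? with
  | none => 0
  | some a => (shuffle u v.dropLast).map (fun w => w ++ [a])

/-- `u ≻ v` as a polynomial in `K⟨A⟩`. -/
noncomputable def succS {A : Type*} (K : Type*) [CommRing K] [Algebra ℚ K]
    (u v : List A) : List A →₀ K :=
  ((succW u v).map (fun w => Finsupp.single w (1 : K))).sum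

/-- `sh(u ⊗ v)` as a polynomial in `K⟨A⟩`. -/
noncomputable def shS {A : Type*} (K : Type*) [CommRing K] [Algebra ℚ K]
    (u v : List A) : List A →₀ K :=
  ((shuffle u v).map (fun w => Finsupp.single w (1 : K))).sum

/-- The deconcatenation coproduct `δ'(w) = Σ_k w.take k ⊗ w.drop k`, with tensors
modelled as finitely supported functions on pairs of words. -/
noncomputable def deconc {A : Type*} {K : Type*} [CommRing K] [Algebra ℚ K]
    (p : List A →₀ K) : (List A × List A) →₀ K :=
  p.sum fun w a => ∑ k ∈ Finset.range (w.length + 1),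
    Finsupp.single (w.take k, w.drop k) a

/-- The tensor product `p ⊗ q` of two polynomials, as a function on pairs of words. -/
noncomputable def tensP {A : Type*} {K : Type*} [CommRing K] [Algebra ℚ K]
    (p q : List A →₀ K) : (List A × List A) →₀ K :=
  p.sum fun u a => q.sum fun v b => Finsupp.single (u, v) (a * b)

section FinsuppLayer
variable {A : Type*} (K : Type*) [CommRing K] [Algebra ℚ K]

noncomputable def GG (m : Multiset (List A × List A)) : (List A × List A) →₀ K :=
  (m.map fun p => Finsupp.single p (1 : K)).sum

lemma GG_add (s t : Multiset (List A × List A)) : GG K (s + t) = GG K s + GG K t := by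
  simp [GG]

lemma deconc_add (p q : List A →₀ K) : deconc (p + q) = deconc p + deconc q := by
  unfold deconc
  refine Finsupp.sum_add_index' (fun w => ?_) (fun w b₁ b₂ => ?_)
  · simp
  · simp [Finsupp.single_add, Finset.sum_add_distrib]

lemma deconc_single (w : List A) (c : K) :
    deconc (Finsupp.single w c) =
      ∑ k ∈ Finset.range (w.length + 1), Finsupp.single (w.take k, w.drop k) c :=
  Finsupp.sum_single_index (by simp)

lemma finsum_single_range (n : ℕ) (g : ℕ → List A × List A) :
    ∑ k ∈ Finset.range n, Finsupp.single (g k) (1:K) = GG K ((Multiset.range n).map g) := by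
  rw [GG, Multiset.map_map, Finset.sum, Finset.range_val]
  rfl

lemma deconc_msum (m : Multiset (List A)) :
    deconc ((m.map fun w => Finsupp.single w (1:K)).sum)
      = GG K (m.bind fun w => (Multiset.range (w.length+1)).map
          fun k => (w.take k, w.drop k)) := by
  induction m using Multiset.induction_on with
  | empty => simp [GG, deconc]
  | cons w m ih =>
    rw [Multiset.map_cons, Multiset.sum_cons, deconc_add, deconc_single, ih,
      Multiset.cons_bind, GG_add, finsum_single_range]

lemma tensP_zero_left (q : List A →₀ K) : tensP 0 q = 0 := Finsupp.sum_zero_index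

lemma tensP_add_left (p₁ p₂ q : List A →₀ K) :
    tensP (p₁ + p₂) q = tensP p₁ q + tensP p₂ q := by
  unfold tensP
  refine Finsupp.sum_add_index' (fun w => ?_) (fun w b₁ b₂ => ?_)
  · simp
  · rw [← Finsupp.sum_add]
    congr 1; ext v b; rw [add_mul, Finsupp.single_add]

lemma tensP_single_left (w : List A) (c : K) (q : List A →₀ K) :
    tensP (Finsupp.single w c) q = q.sum fun v b => Finsupp.single (w, v) (c * b) :=
  Finsupp.sum_single_index (by simp)

lemma tensP_single_msum (w : List A) (n : Multiset (List A)) :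
    tensP (Finsupp.single w (1:K)) ((n.map fun x => Finsupp.single x (1:K)).sum)
      = GG K (n.map fun x => (w, x)) := by
  rw [tensP_single_left]
  induction n using Multiset.induction_on with
  | empty => simp [GG]
  | cons x n ih =>
    rw [Multiset.map_cons, Multiset.sum_cons, Finsupp.sum_add_index' (by simp)
        (fun v b₁ b₂ => by rw [mul_add, Finsupp.single_add]),
      Finsupp.sum_single_index (by simp), ih]
    simp [GG]

lemma tensP_msum (m n : Multiset (List A)) :
    tensP ((m.map fun w => Finsupp.single w (1:K)).sum)
        ((n.map fun x => Finsupp.single x (1:K)).sum)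
      = GG K (m.bind fun w => n.map fun x => (w, x)) := by
  induction m using Multiset.induction_on with
  | empty => simp [GG, tensP_zero_left]
  | cons w m ih =>
    rw [Multiset.map_cons, Multiset.sum_cons, tensP_add_left, ih, tensP_single_msum,
      Multiset.cons_bind, GG_add]

lemma GG_finsum (N : ℕ) (m : ℕ → Multiset (List A × List A)) :
    ∑ i ∈ Finset.range N, GG K (m i) = GG K ((Multiset.range N).bind m) := by
  rw [GG, Multiset.map_bind, Multiset.sum_bind, Finset.sum, Finset.range_val]
  rfl

end FinsuppLayer

lemma succW_concat {A : Type*} (u v' : List A) (c : A) :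
    succW u (v' ++ [c]) = (shuffle u v').map (· ++ [c]) := by
  rw [succW, List.getLast?_concat, List.dropLast_concat]

lemma keyW {A : Type*} (u v' : List A) (c : A) :
    ((shuffle u v').map (· ++ [c])).bind
        (fun w => (Multiset.range (w.length+1)).map fun k => (w.take k, w.drop k))
      = ((shuffle u v').map (· ++ [c])).map (fun w => (w, ([]:List A)))
        + (Dm u v').map (fun p => (p.1, p.2 ++ [c])) := by
  rw [Multiset.bind_map]
  have hsplit : ∀ w : List A,
      (Multiset.range ((w ++ [c]).length+1)).map
          (fun k => ((w ++ [c]).take k, (w ++ [c]).drop k))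
        = ((w ++ [c], ([]:List A))) ::ₘ
            (Multiset.range (w.length+1)).map (fun k => (w.take k, w.drop k ++ [c])) := by
    intro w
    have h1 : (w ++ [c]).length + 1 = (w.length + 1) + 1 := by simp
    rw [h1, Multiset.range_succ, Multiset.map_cons]
    congr 1
    · simp
    · refine Multiset.map_congr rfl fun k hk => ?_
      have hk' : k ≤ w.length := Nat.lt_succ_iff.mp (Multiset.mem_range.mp hk)
      rw [List.take_append_of_le_length hk', List.drop_append_of_le_length hk']
  rw [Multiset.bind_congr (fun w _ => hsplit w)]
  simp only [← Multiset.singleton_add, Multiset.bind_add, Multiset.bind_singleton,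
    Multiset.map_map, Function.comp_def, Dm, Multiset.map_bind]

/-- deconcatenation of a half-shuffle: for words `u, v` with `|v| ≥ 1`,
`δ'(u ≻ v) = (u ≻ v) ⊗ e + Σ sh(u₍₁₎ ⊗ v₍₁₎) ⊗ (u₍₂₎ ≻ v₍₂₎)`, the sum over the
deconcatenation components with `|v₍₂₎| ≥ 1`. -/
theorem deconc_half_shuffle {A : Type*} {K : Type*} [CommRing K] [Algebra ℚ K]
    (u v : List A) (hv : v ≠ []) :
    deconc (succS K u v) =
      tensP (succS K u v) (Finsupp.single [] 1) +
      ∑ i ∈ Finset.range (u.length + 1), ∑ j ∈ Finset.range v.length,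
        tensP (shS K (u.take i) (v.take j)) (succS K (u.drop i) (v.drop j)) := by
  obtain ⟨v', c, rfl⟩ : ∃ v' c, v = v' ++ [c] :=
    ⟨v.dropLast, v.getLast hv, (List.dropLast_append_getLast hv).symm⟩
  -- rewrite RHS first summand
  have h1 : tensP (succS K u (v' ++ [c])) (Finsupp.single [] 1)
      = GG K ((succW u (v' ++ [c])).map fun w => (w, ([]:List A))) := by
    have : (Finsupp.single ([]:List A) (1:K))
        = ((({[]} : Multiset (List A)).map fun x => Finsupp.single x (1:K))).sum := by simp
    rw [succS, this, tensP_msum]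
    simp [GG]
  rw [h1]
  -- rewrite RHS double sum
  have h2 : ∀ i j : ℕ,
      tensP (shS K (u.take i) ((v' ++ [c]).take j)) (succS K (u.drop i) ((v' ++ [c]).drop j))
        = GG K ((shuffle (u.take i) ((v' ++ [c]).take j)).bind fun w1 =>
            (succW (u.drop i) ((v' ++ [c]).drop j)).map fun w2 => (w1, w2)) := by
    intro i j
    rw [shS, succS, tensP_msum]
  have h3 : ∑ i ∈ Finset.range (u.length + 1), ∑ j ∈ Finset.range (v' ++ [c]).length,
      tensP (shS K (u.take i) ((v' ++ [c]).take j)) (succS K (u.drop i) ((v' ++ [c]).drop j))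
      = GG K ((Multiset.range (u.length + 1)).bind fun i =>
          (Multiset.range (v'.length + 1)).bind fun j =>
            (shuffle (u.take i) ((v' ++ [c]).take j)).bind fun w1 =>
              (succW (u.drop i) ((v' ++ [c]).drop j)).map fun w2 => (w1, w2)) := by
    rw [← GG_finsum]
    refine Finset.sum_congr rfl fun i _ => ?_
    have hlen : (v' ++ [c]).length = v'.length + 1 := by simp
    rw [hlen, ← GG_finsum]
    exact Finset.sum_congr rfl fun j _ => h2 i j
  rw [h3, ← GG_add]
  conv_lhs => rw [succS, deconc_msum]
  congr 1
  -- now a pure multiset identity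
  rw [succW_concat, keyW, Dm_eq_Sm]
  congr 1
  rw [Sm]
  simp only [Multiset.map_bind]
  refine Multiset.bind_congr fun i _ => ?_
  refine Multiset.bind_congr fun j hj => ?_
  have hj' : j ≤ v'.length := Nat.lt_succ_iff.mp (Multiset.mem_range.mp hj)
  rw [List.take_append_of_le_length hj', List.drop_append_of_le_length hj', succW_concat]
  simp [PP, Multiset.map_bind, Multiset.map_map, Function.comp_def]
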